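/- Product-to-sum formula: for all integers p, q, r, s, the doubled noncommutative cosines satisfy C(p,q)·C(r,s) = t^(ps−qr)·C(p+r, q+s) + t^(qr−ps)·C(p−r, q−s). (Under the identification of the Kauffman bracket skein algebra of the torus with the algebra of noncommutative cosines, where the skein (p,q)_T corresponds to C(p,q), this is the product-to-sum formula (p,q)_T∗(r,s)_T = t^(ps−qr)(p+r,q+s)_T + t^(−(ps−qr))(p−r,q−s)_T used throughout the paper.) -/

import Mathlib

/-- the product-to-sum formula for the doubled noncommutative
cosines: `C(p,q)·C(r,s) = t^(ps−qr)·C(p+r,q+s) + t^(qr−ps)·C(p−r,q−s)`. -/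
theorem cos_product_to_sum (t : ℂ) (ht : t ≠ 0) (A : Type*) [Ring A] [Algebra ℂ A]
    (l m : Aˣ) (rel : (l : A) * (m : A) = t ^ 2 • ((m : A) * (l : A)))
    (e : ℤ → ℤ → A)
    (he : ∀ p q : ℤ, e p q = t ^ (-(p * q)) • ((l ^ p * m ^ q : Aˣ) : A))
    (Cos : ℤ → ℤ → A)
    (hC : ∀ p q : ℤ, Cos p q = e p q + e (-p) (-q)) :
    ∀ p q r s : ℤ,
      Cos p q * Cos r s =
        t ^ (p * s - q * r) • Cos (p + r) (q + s) +
        t ^ (q * r - p * s) • Cos (p - r) (q - s) := by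
  -- a helper to flip scalar equations
  have flip : ∀ (n : ℤ) (x y : A), x = t ^ n • y → y = t ^ (-n) • x := by
    intro n x y h
    rw [h, smul_smul, zpow_neg, inv_mul_cancel₀ (zpow_ne_zero n ht), one_smul]
  have hrel : (l : A) * (m : A) = t ^ (2 : ℤ) • ((m : A) * (l : A)) := by
    rw [rel]; norm_cast
  -- commuting a single m past l^p
  have key1 : ∀ p : ℤ, ((l ^ p : Aˣ) : A) * (m : A)
      = t ^ (2 * p) • ((m : A) * ((l ^ p : Aˣ) : A)) := by
    have hinv : ((l⁻¹ : Aˣ) : A) * (m : A)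
        = t ^ (-2 : ℤ) • ((m : A) * ((l⁻¹ : Aˣ) : A)) := by
      have h1 : (m : A) * ((l⁻¹ : Aˣ) : A)
          = t ^ (2 : ℤ) • (((l⁻¹ : Aˣ) : A) * (m : A)) := by
        calc (m : A) * ((l⁻¹ : Aˣ) : A)
            = ((l⁻¹ : Aˣ) : A) * ((l : A) * (m : A)) * ((l⁻¹ : Aˣ) : A) := by
              rw [← mul_assoc, Units.inv_mul, one_mul]
          _ = t ^ (2 : ℤ) • (((l⁻¹ : Aˣ) : A) * (m : A)) := by
              rw [hrel, mul_smul_comm, smul_mul_assoc]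
              congr 1
              rw [mul_assoc, mul_assoc, Units.mul_inv, mul_one]
      exact flip 2 _ _ h1
    intro p
    induction p using Int.induction_on with
    | zero => simp
    | succ k ih =>
      have hz : ((l ^ ((k : ℤ) + 1) : Aˣ) : A) = ((l ^ (k : ℤ) : Aˣ) : A) * (l : A) := by
        rw [zpow_add_one]; rfl
      rw [hz, mul_assoc ((l ^ (k : ℤ) : Aˣ) : A), hrel, mul_smul_comm,
        ← mul_assoc ((l ^ (k : ℤ) : Aˣ) : A), ih, smul_mul_assoc,
        smul_smul, mul_assoc ((m : A)), ← hz]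
      congr 1
      rw [← zpow_add₀ ht]
      congr 1
      ring
    | pred k ih =>
      have hz : ((l ^ (-(k : ℤ) - 1) : Aˣ) : A)
          = ((l ^ (-(k : ℤ)) : Aˣ) : A) * ((l⁻¹ : Aˣ) : A) := by
        rw [zpow_sub_one]; rfl
      rw [hz, mul_assoc ((l ^ (-(k : ℤ)) : Aˣ) : A), hinv, mul_smul_comm,
        ← mul_assoc ((l ^ (-(k : ℤ)) : Aˣ) : A), ih, smul_mul_assoc,
        smul_smul, mul_assoc ((m : A)), ← hz]
      congr 1
      rw [← zpow_add₀ ht]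
      congr 1
      ring
  -- commuting m^q past l^p
  have key2 : ∀ p q : ℤ, ((l ^ p : Aˣ) : A) * ((m ^ q : Aˣ) : A)
      = t ^ (2 * p * q) • (((m ^ q : Aˣ) : A) * ((l ^ p : Aˣ) : A)) := by
    intro p
    have hinv : ((l ^ p : Aˣ) : A) * ((m⁻¹ : Aˣ) : A)
        = t ^ (-(2 * p)) • (((m⁻¹ : Aˣ) : A) * ((l ^ p : Aˣ) : A)) := by
      have h1 : ((m⁻¹ : Aˣ) : A) * ((l ^ p : Aˣ) : A)
          = t ^ (2 * p) • (((l ^ p : Aˣ) : A) * ((m⁻¹ : Aˣ) : A)) := by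
        calc ((m⁻¹ : Aˣ) : A) * ((l ^ p : Aˣ) : A)
            = ((m⁻¹ : Aˣ) : A) * (((l ^ p : Aˣ) : A) * (m : A)) * ((m⁻¹ : Aˣ) : A) := by
              rw [mul_assoc, mul_assoc, Units.mul_inv, mul_one]
          _ = t ^ (2 * p) • (((l ^ p : Aˣ) : A) * ((m⁻¹ : Aˣ) : A)) := by
              rw [key1 p, mul_smul_comm, smul_mul_assoc,
                ← mul_assoc ((m⁻¹ : Aˣ) : A) (m : A), Units.inv_mul, one_mul]
      exact flip (2 * p) _ _ h1
    intro q
    induction q using Int.induction_on with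
    | zero => simp
    | succ k ih =>
      have hz : ((m ^ ((k : ℤ) + 1) : Aˣ) : A) = ((m ^ (k : ℤ) : Aˣ) : A) * (m : A) := by
        rw [zpow_add_one]; rfl
      rw [hz, ← mul_assoc ((l ^ p : Aˣ) : A), ih, smul_mul_assoc,
        mul_assoc ((m ^ (k : ℤ) : Aˣ) : A), key1 p, mul_smul_comm, smul_smul,
        ← mul_assoc ((m ^ (k : ℤ) : Aˣ) : A), ← hz]
      congr 1
      rw [← zpow_add₀ ht]
      congr 1
      ring
    | pred k ih =>
      have hz : ((m ^ (-(k : ℤ) - 1) : Aˣ) : A)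
          = ((m ^ (-(k : ℤ)) : Aˣ) : A) * ((m⁻¹ : Aˣ) : A) := by
        rw [zpow_sub_one]; rfl
      rw [hz, ← mul_assoc ((l ^ p : Aˣ) : A), ih, smul_mul_assoc,
        mul_assoc ((m ^ (-(k : ℤ)) : Aˣ) : A), hinv, mul_smul_comm, smul_smul,
        ← mul_assoc ((m ^ (-(k : ℤ)) : Aˣ) : A), ← hz]
      congr 1
      rw [← zpow_add₀ ht]
      congr 1
      ring
  -- the product formula for the noncommutative exponentials
  have emul : ∀ p q r s : ℤ, e p q * e r s = t ^ (p * s - q * r) • e (p + r) (q + s) := by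
    intro p q r s
    have hqr : ((m ^ q : Aˣ) : A) * ((l ^ r : Aˣ) : A)
        = t ^ (-(2 * r * q)) • (((l ^ r : Aˣ) : A) * ((m ^ q : Aˣ) : A)) :=
      flip (2 * r * q) _ _ (key2 r q)
    have hmid : (((l ^ p : Aˣ) : A) * ((m ^ q : Aˣ) : A)) * (((l ^ r : Aˣ) : A) * ((m ^ s : Aˣ) : A))
        = t ^ (-(2 * r * q)) • (((l ^ (p + r) : Aˣ) : A) * ((m ^ (q + s) : Aˣ) : A)) := by
      rw [mul_assoc ((l ^ p : Aˣ) : A), ← mul_assoc ((m ^ q : Aˣ) : A), hqr,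
        smul_mul_assoc, mul_smul_comm]
      congr 1
      rw [← mul_assoc, ← mul_assoc, ← Units.val_mul, ← zpow_add,
        mul_assoc, ← Units.val_mul, ← zpow_add]
    rw [he p q, he r s, he (p + r) (q + s)]
    rw [Units.val_mul, Units.val_mul, Units.val_mul]
    rw [smul_mul_assoc, mul_smul_comm, hmid]
    simp only [smul_smul]
    congr 1
    rw [← zpow_add₀ ht, ← zpow_add₀ ht, ← zpow_add₀ ht]
    congr 1
    ring
  intro p q r s
  rw [hC p q, hC r s, hC (p + r) (q + s), hC (p - r) (q - s)]
  rw [add_mul, mul_add, mul_add]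
  rw [emul p q r s, emul p q (-r) (-s), emul (-p) (-q) r s, emul (-p) (-q) (-r) (-s)]
  have h1 : p * -s - q * -r = q * r - p * s := by ring
  have h2 : -p * s - -q * r = q * r - p * s := by ring
  have h3 : -p * -s - -q * -r = p * s - q * r := by ring
  have e1 : (p : ℤ) + -r = p - r := by ring
  have e2 : (q : ℤ) + -s = q - s := by ring
  have e3 : (-p : ℤ) + r = -(p - r) := by ring
  have e4 : (-q : ℤ) + s = -(q - s) := by ring
  have e5 : (-p : ℤ) + -r = -(p + r) := by ring
  have e6 : (-q : ℤ) + -s = -(q + s) := by ring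
  rw [h1, h2, h3, e1, e2, e3, e4, e5, e6]
  rw [smul_add, smul_add]
  abel
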